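/- Fix a C-sequence ⟨C_α | α < ω₁⟩ on ω₁ satisfying (⋆) and let i ∈ {1,2}. The tree T(ρ_i) = {ρ_i(·,β)↾α : α ≤ β < ω₁} of restrictions of the functions ρ_i(·,β) : β → ℤ, partially ordered by function extension, is an Aronszajn tree: for every α < ω₁ there is an element of T(ρ_i) with domain α; for every α < ω₁ the level {t ∈ T(ρ_i) : dom(t) = α} is countable; and T(ρ_i) has no uncountable chain. -/

import Mathlib

noncomputable section
open Ordinal Set

/-- The first uncountable ordinal `ω₁`. -/
def omega1 : Ordinal.{0} := (Cardinal.aleph 1).ord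

/-- `IsOtp s o`: the set of ordinals `s` has order type `o`. -/
def IsOtp (s : Set Ordinal.{0}) (o : Ordinal.{0}) : Prop :=
  Nonempty (s ≃o Set.Iio o)

/-- A C-sequence on `ω₁`: each `C α` is a cofinal subset of `α` (in particular `C 0 = ∅`). -/
def IsCSequence (C : Ordinal.{0} → Set Ordinal.{0}) : Prop :=
  ∀ α, α < omega1 → (∀ ξ ∈ C α, ξ < α) ∧ (∀ ξ, ξ < α → ∃ η ∈ C α, ξ ≤ η)

/-- The condition `(⋆)`: `otp (C α) = cf (α)` for all `α < ω₁`. -/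
def StarProperty (C : Ordinal.{0} → Set Ordinal.{0}) : Prop :=
  ∀ α, α < omega1 → IsOtp (C α) (Ordinal.cof α).ord

/-- `Tr` is the upper trace function of the walk along the C-sequence `C`:
`Tr α α = {α}` and `Tr α β = {β} ∪ Tr α (min (C β \ α))` for `α < β < ω₁`. -/
def IsUpperTrace (C : Ordinal.{0} → Set Ordinal.{0})
    (Tr : Ordinal.{0} → Ordinal.{0} → Finset Ordinal.{0}) : Prop :=
  (∀ α, Tr α α = {α}) ∧
  ∀ α β, α < β → β < omega1 → Tr α β = insert β (Tr α (sInf (C β \ Set.Iio α)))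

/-- `IsRho1 C Tr rho1`: `rho1 α β` is the maximum weight
`max {otp (C ξ ∩ α) | ξ ∈ Tr α β \ {α}}`, a natural number under `(⋆)`. -/
def IsRho1 (C : Ordinal.{0} → Set Ordinal.{0})
    (Tr : Ordinal.{0} → Ordinal.{0} → Finset Ordinal.{0})
    (rho1 : Ordinal.{0} → Ordinal.{0} → ℕ) : Prop :=
  ∀ α β, α < β → β < omega1 →
    IsGreatest {o : Ordinal | ∃ ξ ∈ Tr α β, ξ ≠ α ∧ IsOtp (C ξ ∩ Set.Iio α) o}
      (rho1 α β)

/-- The number-of-steps function `ρ₂ (α, β) = |Tr (α, β)|`, as an integer. -/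
def rho2 (Tr : Ordinal.{0} → Ordinal.{0} → Finset Ordinal.{0}) (α β : Ordinal.{0}) : ℤ :=
  (Tr α β).card

/-- The tree `T(ρ)` of restrictions `ρ(·,β) ↾ α` for `α ≤ β < ω₁`: an element with domain
`α` is coded as the pair `(α, f)` where `f` agrees with `ρ(·,β)` below `α` and is `0` above. -/
def treeT (rho : Ordinal.{0} → Ordinal.{0} → ℤ) : Set (Ordinal.{0} × (Ordinal.{0} → ℤ)) :=
  {p | ∃ β, p.1 ≤ β ∧ β < omega1 ∧ p.2 = fun ξ => if ξ < p.1 then rho ξ β else 0}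

/-- The extension (tree) order on coded partial functions. -/
def treeLE (p q : Ordinal.{0} × (Ordinal.{0} → ℤ)) : Prop :=
  p.1 ≤ q.1 ∧ ∀ ξ, ξ < p.1 → p.2 ξ = q.2 ξ

namespace Stmt7Aux

lemma omega1_isLimit : Order.IsSuccLimit omega1 :=
  Cardinal.isSuccLimit_ord (le_of_lt Cardinal.aleph0_lt_aleph_one)

lemma countable_Iio {α : Ordinal.{0}} (h : α < omega1) : (Set.Iio α).Countable := by
  rw [Cardinal.countable_iff_lt_aleph_one, Ordinal.mk_Iio_ordinal]
  have h1 : α.card < Cardinal.aleph 1 := Cardinal.lt_ord.mp h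
  have : Cardinal.lift.{1} α.card < Cardinal.lift.{1} (Cardinal.aleph 1) :=
    Cardinal.lift_lt.mpr h1
  simpa [Cardinal.lift_aleph] using this

lemma sup_lt_omega1 {f : ℕ → Ordinal.{0}} (h : ∀ n, f n < omega1) : (⨆ n, f n) < omega1 := by
  apply Cardinal.iSup_lt_ord_of_isRegular Cardinal.isRegular_aleph_one _ h
  simpa using Cardinal.aleph0_lt_aleph_one

/-- a countable subset of `Iio omega1` is bounded -/
lemma bounded_of_countable {S : Set Ordinal.{0}} (hS : S.Countable)
    (hS1 : ∀ x ∈ S, x < omega1) : ∃ γ, γ < omega1 ∧ ∀ x ∈ S, x ≤ γ := by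
  rcases S.eq_empty_or_nonempty with h | h
  · exact ⟨0, omega1_isLimit.pos, by simp [h]⟩
  obtain ⟨f, hf⟩ := hS.exists_eq_range h
  refine ⟨⨆ n, f n, sup_lt_omega1 (fun n => hS1 _ (hf ▸ Set.mem_range_self n)), ?_⟩
  intro x hx
  obtain ⟨n, rfl⟩ := hf ▸ hx
  exact le_ciSup (Ordinal.bddAbove_range f) n

lemma unbounded_of_uncountable {S : Set Ordinal.{0}} (hS : ¬ S.Countable)
    (hS1 : ∀ x ∈ S, x < omega1) : ∀ γ, γ < omega1 → ∃ x ∈ S, γ < x := by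
  intro γ hγ
  by_contra hcon
  push_neg at hcon
  refine hS (Set.Countable.mono ?_ (countable_Iio (omega1_isLimit.succ_lt hγ)))
  intro x hx
  exact lt_of_le_of_lt (hcon x hx) (Order.lt_succ γ)


lemma finite_Iio_natCast (n : ℕ) : (Set.Iio (n : Ordinal.{0})).Finite := by
  apply Set.Finite.subset ((Set.finite_Iio n).image (Nat.cast : ℕ → Ordinal))
  intro x hx
  have hω : x < Ordinal.omega0 := lt_of_lt_of_le hx (Ordinal.nat_lt_omega0 n).le
  obtain ⟨m, rfl⟩ := Ordinal.lt_omega0.mp hω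
  exact ⟨m, Set.mem_Iio.mpr (Nat.cast_lt.mp (Set.mem_Iio.mp hx)), rfl⟩

section Walks

variable {C : Ordinal.{0} → Set Ordinal.{0}} {Tr : Ordinal.{0} → Ordinal.{0} → Finset Ordinal.{0}}

lemma cseq_inter_finite (hC : IsCSequence C) (hstar : StarProperty C) {η α : Ordinal}
    (hη : η < omega1) (hαη : α < η) : (C η ∩ Set.Iio α).Finite := by
  obtain ⟨e⟩ := hstar η hη
  obtain ⟨x, hx, hαx⟩ := (hC η hη).2 α hαη
  -- the image of x is a natural number
  have hcof : (Ordinal.cof η).ord ≤ Ordinal.omega0 := by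
    rw [← Cardinal.ord_aleph0]
    apply Cardinal.ord_le_ord.mpr
    have h1 : η.card < Cardinal.aleph 1 := Cardinal.lt_ord.mp hη
    rw [← Cardinal.succ_aleph0] at h1
    exact le_trans (Ordinal.cof_le_card η) (Order.lt_succ_iff.mp h1)
  have hex : (e ⟨x, hx⟩ : Ordinal) < Ordinal.omega0 := lt_of_lt_of_le (e ⟨x, hx⟩).2 hcof
  obtain ⟨n, hn⟩ := Ordinal.lt_omega0.mp hex
  -- C η ∩ Iio α is the image of a finite set
  have key : C η ∩ Set.Iio α ⊆ (fun z : ↥(C η) => (z : Ordinal)) ''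
      ((fun z : ↥(C η) => e z) ⁻¹' {w | (w : Ordinal) < (n : Ordinal)}) := by
    rintro y ⟨hy, hyα⟩
    refine ⟨⟨y, hy⟩, ?_, rfl⟩
    have : (⟨y, hy⟩ : ↥(C η)) < ⟨x, hx⟩ := Subtype.mk_lt_mk.mpr (lt_of_lt_of_le hyα hαx)
    have h2 : ((e ⟨y, hy⟩ : ↥(Set.Iio (Ordinal.cof η).ord)) : Ordinal) <
        ((e ⟨x, hx⟩ : ↥(Set.Iio (Ordinal.cof η).ord)) : Ordinal) :=
      Subtype.coe_lt_coe.mpr ((OrderIso.lt_iff_lt e).mpr this)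
    rw [hn] at h2
    exact h2
  apply Set.Finite.subset _ key
  apply Set.Finite.image
  apply Set.Finite.preimage (e.injective.injOn)
  apply Set.Finite.preimage (Subtype.val_injective.injOn)
  exact finite_Iio_natCast n

lemma step_facts (hC : IsCSequence C) {α β : Ordinal} (hαβ : α < β) (hβ : β < omega1) :
    sInf (C β \ Set.Iio α) ∈ C β ∧ α ≤ sInf (C β \ Set.Iio α) ∧ sInf (C β \ Set.Iio α) < β ∧
      ∀ x ∈ C β, x < sInf (C β \ Set.Iio α) → x < α := by
  have hne : (C β \ Set.Iio α).Nonempty := by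
    obtain ⟨η, hη, hαη⟩ := (hC β hβ).2 α hαβ
    exact ⟨η, hη, by simpa using not_lt.mpr hαη⟩
  have hmem := csInf_mem hne
  refine ⟨hmem.1, by simpa using hmem.2, (hC β hβ).1 _ hmem.1, ?_⟩
  intro x hx hlt
  by_contra h
  exact absurd (csInf_le' (show x ∈ C β \ Set.Iio α from ⟨hx, by simpa using h⟩))
    (not_le.mpr hlt)

lemma trace_mem (hC : IsCSequence C) (hTr : IsUpperTrace C Tr) :
    ∀ β, β < omega1 → ∀ α, α ≤ β →
      α ∈ Tr α β ∧ β ∈ Tr α β ∧ ∀ η ∈ Tr α β, α ≤ η ∧ η ≤ β := by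
  intro β
  induction β using Ordinal.induction with
  | h β IH =>
    intro hβ α hαβ
    rcases eq_or_lt_of_le hαβ with rfl | hlt
    · rw [hTr.1]; simp
    · obtain ⟨hmC, hαm, hmβ, _⟩ := step_facts hC hlt hβ
      have H := IH _ hmβ (hmβ.trans hβ) α hαm
      rw [hTr.2 α β hlt hβ]
      refine ⟨Finset.mem_insert_of_mem H.1, Finset.mem_insert_self _ _, ?_⟩
      intro η hη
      rcases Finset.mem_insert.mp hη with rfl | hη'
      · exact ⟨le_of_lt hlt, le_refl _⟩
      · exact ⟨(H.2.2 η hη').1, le_of_lt (lt_of_le_of_lt (H.2.2 η hη').2 hmβ)⟩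

/-- Key tail lemma: below `α` but above all points of `⋃ {C η ∩ α : η ∈ Tr α β, η ≠ α}`,
the walk from `β` factors through `α`. -/
lemma trace_tail (hC : IsCSequence C) (hTr : IsUpperTrace C Tr) :
    ∀ β, β < omega1 → ∀ α, α < β → ∀ ξ, ξ < α →
      (∀ η ∈ Tr α β, η ≠ α → ∀ x ∈ C η ∩ Set.Iio α, x < ξ) →
      Tr ξ β = (Tr α β).erase α ∪ Tr ξ α := by
  intro β
  induction β using Ordinal.induction with
  | h β IH =>
    intro hβ α hαβ ξ hξα hdom
    obtain ⟨hmC, hαm, hmβ, hmin⟩ := step_facts hC hαβ hβ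
    set m := sInf (C β \ Set.Iio α) with hm
    have hβTr : β ∈ Tr α β := (trace_mem hC hTr β hβ α (le_of_lt hαβ)).2.1
    -- the first step from β is the same for ξ and for α
    have hstep : sInf (C β \ Set.Iio ξ) = m := by
      have : C β \ Set.Iio ξ = C β \ Set.Iio α := by
        ext x
        simp only [Set.mem_diff, Set.mem_Iio, not_lt]
        constructor
        · rintro ⟨hx, hξx⟩
          refine ⟨hx, ?_⟩
          by_contra h
          exact absurd (hdom β hβTr (ne_of_gt hαβ) x ⟨hx, by simpa using h⟩)
            (not_lt.mpr hξx)
        · rintro ⟨hx, hαx⟩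
          exact ⟨hx, le_trans (le_of_lt hξα) hαx⟩
      rw [this]
    have hTrβ : Tr α β = insert β (Tr α m) := hTr.2 α β hαβ hβ
    have hTrξβ : Tr ξ β = insert β (Tr ξ m) := by
      rw [hTr.2 ξ β (lt_trans hξα hαβ) hβ, hstep]
    rcases eq_or_lt_of_le hαm with heq | hαm'
    · -- the walk reaches α in one step
      have hTrαm : Tr α m = ({α} : Finset Ordinal) := by rw [← heq, hTr.1]
      have hTrξm : Tr ξ m = Tr ξ α := by rw [← heq]
      rw [hTrξβ, hTrξm, hTrβ, hTrαm,
        Finset.erase_insert_of_ne (ne_of_gt hαβ), Finset.erase_singleton,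
        Finset.insert_union, Finset.empty_union]
    · have hsub : ∀ η ∈ Tr α m, η ∈ Tr α β := by
        intro η hη; rw [hTrβ]; exact Finset.mem_insert_of_mem hη
      have IH' := IH m hmβ (hmβ.trans hβ) α hαm' ξ hξα
        (fun η hη hne x hx => hdom η (hsub η hη) hne x hx)
      rw [hTrξβ, IH', hTrβ]
      rw [Finset.erase_insert_of_ne (ne_of_gt hαβ)]
      rw [Finset.insert_union]


lemma isOtp_of_finite {s : Set Ordinal.{0}} (hs : s.Finite) : IsOtp s s.ncard := by
  classical
  have hcard : hs.toFinset.card = s.ncard := (Set.ncard_eq_toFinset_card s hs).symm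
  let e1 : Fin s.ncard ≃o {x // x ∈ hs.toFinset} := hs.toFinset.orderIsoOfFin hcard
  let e2 : ({x // x ∈ hs.toFinset}) ≃o ↥s :=
    { toEquiv := Equiv.subtypeEquivRight (fun x => hs.mem_toFinset),
      map_rel_iff' := Iff.rfl }
  let f : Fin s.ncard → ↥(Set.Iio (s.ncard : Ordinal)) :=
    fun k => ⟨(k : ℕ), Set.mem_Iio.mpr (by exact_mod_cast k.2)⟩
  have hf : StrictMono f := fun a b hab => Subtype.mk_lt_mk.mpr (by exact_mod_cast hab)
  have hsurj : Function.Surjective f := by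
    rintro ⟨x, hx⟩
    have hx' : x < (s.ncard : Ordinal) := Set.mem_Iio.mp hx
    have : x < Ordinal.omega0 := lt_of_lt_of_le hx' (Ordinal.nat_lt_omega0 _).le
    obtain ⟨m, rfl⟩ := Ordinal.lt_omega0.mp this
    exact ⟨⟨m, Nat.cast_lt.mp hx'⟩, rfl⟩
  exact ⟨(e2.symm.trans e1.symm).trans (StrictMono.orderIsoOfSurjective f hf hsurj)⟩

/-- The finite set of "bad points" below `α` for the pair `(α, β)`. -/
def badSet (C : Ordinal.{0} → Set Ordinal.{0})
    (Tr : Ordinal.{0} → Ordinal.{0} → Finset Ordinal.{0}) (α β : Ordinal.{0}) :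
    Set Ordinal.{0} :=
  {x | x < α ∧ ∃ η ∈ Tr α β, η ≠ α ∧ x ∈ C η}

lemma badSet_finite (hC : IsCSequence C) (hstar : StarProperty C)
    (hTr : IsUpperTrace C Tr) {α β : Ordinal} (hαβ : α < β) (hβ : β < omega1) :
    (badSet C Tr α β).Finite := by
  classical
  have : badSet C Tr α β ⊆ ⋃ η ∈ ((Tr α β).erase α : Finset Ordinal), (C η ∩ Set.Iio α) := by
    rintro x ⟨hxα, η, hη, hηα, hxη⟩
    exact Set.mem_biUnion (Finset.mem_erase.mpr ⟨hηα, hη⟩) ⟨hxη, hxα⟩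
  apply Set.Finite.subset _ this
  apply Set.Finite.biUnion ((Tr α β).erase α).finite_toSet
  intro η hη
  rw [Finset.coe_erase, Set.mem_diff] at hη
  have hη1 : η ∈ Tr α β := hη.1
  have hηα : α < η := by
    rcases (trace_mem hC hTr β hβ α hαβ.le).2.2 η hη1 with ⟨h1, _⟩
    exact lt_of_le_of_ne h1 (fun h => hη.2 (by simp [h.symm]))
  have hηω : η < omega1 :=
    lt_of_le_of_lt ((trace_mem hC hTr β hβ α hαβ.le).2.2 η hη1).2 hβ
  exact cseq_inter_finite hC hstar hηω hηα

lemma badSet_lt {α β : Ordinal} : ∀ x ∈ badSet C Tr α β, x < α := fun _ hx => hx.1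

lemma trace_tail' (hC : IsCSequence C) (hTr : IsUpperTrace C Tr) {α β : Ordinal}
    (hαβ : α < β) (hβ : β < omega1) {ξ : Ordinal} (hξα : ξ < α)
    (hdom : ∀ x ∈ badSet C Tr α β, x < ξ) :
    Tr ξ β = (Tr α β).erase α ∪ Tr ξ α := by
  apply trace_tail hC hTr β hβ α hαβ ξ hξα
  intro η hη hηα x hx
  exact hdom x ⟨hx.2, η, hη, hηα, hx.1⟩

/-- tail formula for `ρ₂` -/
lemma rho2_tail (hC : IsCSequence C) (hstar : StarProperty C) (hTr : IsUpperTrace C Tr)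
    {α β : Ordinal} (hαβ : α < β) (hβ : β < omega1) :
    ∃ F : Set Ordinal, F.Finite ∧ (∀ x ∈ F, x < α) ∧
      ∀ ξ, ξ < α → (∀ x ∈ F, x < ξ) →
        rho2 Tr ξ β = rho2 Tr ξ α + (rho2 Tr α β - 1) := by
  classical
  refine ⟨badSet C Tr α β, badSet_finite hC hstar hTr hαβ hβ, badSet_lt, ?_⟩
  intro ξ hξα hdom
  have htail := trace_tail' hC hTr hαβ hβ hξα hdom
  have hαω : α < omega1 := hαβ.trans hβ
  have hdisj : Disjoint ((Tr α β).erase α) (Tr ξ α) := by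
    rw [Finset.disjoint_left]
    intro η hη hη'
    have h1 : α < η := by
      rcases Finset.mem_erase.mp hη with ⟨hne, hmem⟩
      exact lt_of_le_of_ne ((trace_mem hC hTr β hβ α hαβ.le).2.2 η hmem).1 (Ne.symm hne)
    have h2 : η ≤ α := ((trace_mem hC hTr α hαω ξ hξα.le).2.2 η hη').2
    exact absurd h2 (not_le.mpr h1)
  have hcard : (Tr ξ β).card = ((Tr α β).erase α).card + (Tr ξ α).card := by
    rw [htail, Finset.card_union_of_disjoint hdisj]
  have hαmem : α ∈ Tr α β := (trace_mem hC hTr β hβ α hαβ.le).1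
  show ((Tr ξ β).card : ℤ) = ((Tr ξ α).card : ℤ) + (((Tr α β).card : ℤ) - 1)
  rw [hcard]
  push_cast
  rw [Finset.cast_card_erase_of_mem hαmem]
  ring

/-- tail formula for `ρ₁` -/
lemma rho1_tail (hC : IsCSequence C) (hstar : StarProperty C) (hTr : IsUpperTrace C Tr)
    {rho1 : Ordinal → Ordinal → ℕ} (hrho1 : IsRho1 C Tr rho1)
    {α β : Ordinal} (hαβ : α < β) (hβ : β < omega1) :
    ∃ F : Set Ordinal, F.Finite ∧ (∀ x ∈ F, x < α) ∧
      ∀ ξ, ξ < α → (∀ x ∈ F, x < ξ) →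
        rho1 ξ β = max (rho1 α β) (rho1 ξ α) := by
  classical
  refine ⟨badSet C Tr α β, badSet_finite hC hstar hTr hαβ hβ, badSet_lt, ?_⟩
  intro ξ hξα hdom
  have htail := trace_tail' hC hTr hαβ hβ hξα hdom
  have hαω : α < omega1 := hαβ.trans hβ
  have htm := trace_mem hC hTr β hβ α hαβ.le
  -- each η ∈ (Tr α β).erase α satisfies C η ∩ Iio ξ = C η ∩ Iio α
  have hCeq : ∀ η ∈ (Tr α β).erase α, C η ∩ Set.Iio ξ = C η ∩ Set.Iio α := by
    intro η hη
    rcases Finset.mem_erase.mp hη with ⟨hne, hmem⟩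
    ext x
    constructor
    · rintro ⟨h1, h2⟩
      exact ⟨h1, Set.mem_Iio.mpr (lt_trans (Set.mem_Iio.mp h2) hξα)⟩
    · rintro ⟨h1, h2⟩
      exact ⟨h1, Set.mem_Iio.mpr (hdom x ⟨Set.mem_Iio.mp h2, η, hmem, hne, h1⟩)⟩
  have hgt : ∀ η ∈ (Tr α β).erase α, ξ < η := by
    intro η hη
    rcases Finset.mem_erase.mp hη with ⟨hne, hmem⟩
    exact lt_of_lt_of_le hξα (lt_of_le_of_ne (htm.2.2 η hmem).1 (Ne.symm hne)).le
  -- decompose the defining set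
  have hset : {o : Ordinal | ∃ η ∈ Tr ξ β, η ≠ ξ ∧ IsOtp (C η ∩ Set.Iio ξ) o} =
      {o : Ordinal | ∃ η ∈ Tr α β, η ≠ α ∧ IsOtp (C η ∩ Set.Iio α) o} ∪
      {o : Ordinal | ∃ η ∈ Tr ξ α, η ≠ ξ ∧ IsOtp (C η ∩ Set.Iio ξ) o} := by
    ext o
    simp only [Set.mem_setOf_eq, Set.mem_union]
    constructor
    · rintro ⟨η, hη, hηξ, hotp⟩
      rw [htail, Finset.mem_union] at hη
      rcases hη with hη | hη
      · rcases Finset.mem_erase.mp hη with ⟨hne, hmem⟩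
        exact Or.inl ⟨η, hmem, hne, (hCeq η hη) ▸ hotp⟩
      · exact Or.inr ⟨η, hη, hηξ, hotp⟩
    · rintro (⟨η, hη, hηα, hotp⟩ | ⟨η, hη, hηξ, hotp⟩)
      · have hη' : η ∈ (Tr α β).erase α := Finset.mem_erase.mpr ⟨hηα, hη⟩
        refine ⟨η, ?_, (hgt η hη').ne', (hCeq η hη').symm ▸ hotp⟩
        rw [htail]; exact Finset.mem_union_left _ hη'
      · refine ⟨η, ?_, hηξ, hotp⟩
        rw [htail]; exact Finset.mem_union_right _ hη
  have h1 := hrho1 ξ β (hξα.trans hαβ) hβ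
  rw [hset] at h1
  have h2 := (hrho1 α β hαβ hβ).union (hrho1 ξ α hξα hαω)
  have := h1.unique h2
  have hcast : ((rho1 α β : Ordinal) ⊔ (rho1 ξ α : Ordinal)) =
      ((max (rho1 α β) (rho1 ξ α) : ℕ) : Ordinal) :=
    (Nat.mono_cast.map_max).symm
  rw [hcast] at this
  exact_mod_cast this

/-- `ρ₁(⬝,β)` is finite-to-one -/
lemma rho1_fto (hC : IsCSequence C) (hstar : StarProperty C) (hTr : IsUpperTrace C Tr)
    {rho1 : Ordinal → Ordinal → ℕ} (hrho1 : IsRho1 C Tr rho1) :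
    ∀ β, β < omega1 → ∀ n : ℕ, {ξ | ξ < β ∧ rho1 ξ β ≤ n}.Finite := by
  intro β
  induction β using Ordinal.induction with
  | h β IH =>
    intro hβ n
    classical
    set T : Set Ordinal := {x | x ∈ C β ∧ (C β ∩ Set.Iio x).ncard ≤ n} with hT
    have hmono : StrictMonoOn (fun x => (C β ∩ Set.Iio x).ncard) (C β) := by
      intro x hx y hy hxy
      apply Set.ncard_lt_ncard
      · constructor
        · exact Set.inter_subset_inter_right _ (Set.Iio_subset_Iio hxy.le)
        · intro hsub
          exact absurd ((hsub ⟨hx, Set.mem_Iio.mpr hxy⟩).2) (lt_irrefl x)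
      · exact cseq_inter_finite hC hstar hβ ((hC β hβ).1 y hy)
    have hTfin : T.Finite := by
      apply Set.Finite.of_finite_image (f := fun x => (C β ∩ Set.Iio x).ncard)
      · apply Set.Finite.subset (Set.finite_Iic n)
        rintro _ ⟨x, hx, rfl⟩
        exact hx.2
      · exact (hmono.injOn).mono (fun x hx => hx.1)
    have hsub : {ξ | ξ < β ∧ rho1 ξ β ≤ n} ⊆
        T ∪ ⋃ m ∈ T, {ξ | ξ < m ∧ rho1 ξ m ≤ n} := by
      rintro ξ ⟨hξβ, hrle⟩
      obtain ⟨hmC, hξm, hmβ, hmin⟩ := step_facts hC hξβ hβ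
      set m := sInf (C β \ Set.Iio ξ) with hm
      have hfinCξ : (C β ∩ Set.Iio ξ).Finite := cseq_inter_finite hC hstar hβ hξβ
      have hβmem : β ∈ Tr ξ β := (trace_mem hC hTr β hβ ξ hξβ.le).2.1
      have hmemG : ((C β ∩ Set.Iio ξ).ncard : Ordinal) ∈
          {o : Ordinal | ∃ η ∈ Tr ξ β, η ≠ ξ ∧ IsOtp (C η ∩ Set.Iio ξ) o} :=
        ⟨β, hβmem, hξβ.ne', isOtp_of_finite hfinCξ⟩
      have hcard : (C β ∩ Set.Iio ξ).ncard ≤ n := by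
        have := (hrho1 ξ β hξβ hβ).2 hmemG
        exact le_trans (Nat.cast_le.mp this) hrle
      have hCm : C β ∩ Set.Iio m = C β ∩ Set.Iio ξ := by
        ext x
        constructor
        · rintro ⟨h1, h2⟩
          exact ⟨h1, Set.mem_Iio.mpr (hmin x h1 (Set.mem_Iio.mp h2))⟩
        · rintro ⟨h1, h2⟩
          exact ⟨h1, Set.mem_Iio.mpr (lt_of_lt_of_le (Set.mem_Iio.mp h2) hξm)⟩
      have hmT : m ∈ T := ⟨hmC, by rw [hCm]; exact hcard⟩
      rcases eq_or_lt_of_le hξm with heq | hξm'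
      · exact Or.inl (heq ▸ hmT)
      · refine Or.inr (Set.mem_biUnion hmT ⟨hξm', ?_⟩)
        have hmω : m < omega1 := hmβ.trans hβ
        have hins : Tr ξ β = insert β (Tr ξ m) := hTr.2 ξ β hξβ hβ
        have h1 := (hrho1 ξ m hξm' hmω).1
        have h2 : ((rho1 ξ m : ℕ) : Ordinal) ∈
            {o : Ordinal | ∃ η ∈ Tr ξ β, η ≠ ξ ∧ IsOtp (C η ∩ Set.Iio ξ) o} := by
          obtain ⟨η, hη, hηξ, hotp⟩ := h1
          exact ⟨η, by rw [hins]; exact Finset.mem_insert_of_mem hη, hηξ, hotp⟩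
        have := (hrho1 ξ β hξβ hβ).2 h2
        exact le_trans (Nat.cast_le.mp this) hrle
    apply Set.Finite.subset _ hsub
    apply Set.Finite.union hTfin
    apply Set.Finite.biUnion hTfin
    intro m hm
    exact IH m ((hC β hβ).1 m hm.1) (((hC β hβ).1 m hm.1).trans hβ) n

end Walks

section Levels

variable (rho : Ordinal.{0} → Ordinal.{0} → ℤ)

/-- the level-`α` functions of the tree `T(ρ)` -/
def LevelSet (α : Ordinal.{0}) : Set (Ordinal.{0} → ℤ) :=
  {f | ∃ β, α ≤ β ∧ β < omega1 ∧ f = fun ξ => if ξ < α then rho ξ β else 0}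

lemma levels_countable (G : ℤ → ℤ → ℤ)
    (hcoh : ∀ α β, α < β → β < omega1 → ∃ F : Set Ordinal, F.Finite ∧ (∀ x ∈ F, x < α) ∧
      ∃ k : ℤ, ∀ ξ, ξ < α → (∀ x ∈ F, x < ξ) → rho ξ β = G (rho ξ α) k) :
    ∀ α, α < omega1 → (LevelSet rho α).Countable := by
  intro α
  induction α using Ordinal.induction with
  | h α IH =>
    intro hα
    rcases Ordinal.zero_or_succ_or_isSuccLimit α with h0 | ⟨t, ht⟩ | hlim
    · apply Set.Countable.mono _ (Set.countable_singleton (fun _ => (0 : ℤ)))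
      rintro f ⟨β, _, _, rfl⟩
      simp only [Set.mem_singleton_iff]
      funext ξ
      rw [if_neg (by rw [h0]; exact fun h => not_lt_zero h)]
    · -- successor case
      subst ht
      have htω : t < omega1 := lt_of_le_of_lt (Order.le_succ t) hα
      apply Set.Countable.mono _ (Set.Countable.image
        (Set.Countable.prod (IH t (Order.lt_succ t) htω) Set.countable_univ)
        (fun q : (Ordinal → ℤ) × ℤ =>
          fun ξ => if ξ < t then q.1 ξ else if ξ = t then q.2 else 0))
      rintro f ⟨β, hβ1, hβ2, rfl⟩
      refine ⟨⟨fun ξ => if ξ < t then rho ξ β else 0, rho t β⟩,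
        ⟨⟨β, le_trans (Order.le_succ t) hβ1, hβ2, rfl⟩, Set.mem_univ _⟩, ?_⟩
      funext ξ
      simp only
      rcases lt_trichotomy ξ t with h | h | h
      · rw [if_pos h, if_pos h, if_pos (h.trans (Order.lt_succ t))]
      · subst h
        rw [if_neg (lt_irrefl ξ), if_pos rfl, if_pos (Order.lt_succ ξ)]
      · rw [if_neg (not_lt.mpr h.le), if_neg (ne_of_gt h),
          if_neg (not_lt.mpr (Order.succ_le_of_lt h))]
    · -- limit case
      set X0 : Set (Ordinal → ℤ) := {fun ξ => if ξ < α then rho ξ α else 0} with hX0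
      set X : Set (Ordinal → ℤ) := (fun k : ℤ =>
          fun ξ => if ξ < α then G (rho ξ α) k else 0) '' Set.univ with hX
      set Y : Set (Ordinal → ℤ) := ⋃ s ∈ Set.Iio α,
          (fun q : (Ordinal → ℤ) × ℤ =>
            fun ξ => if ξ < Order.succ s then q.1 ξ
              else if ξ < α then G (rho ξ α) q.2 else 0) ''
            (LevelSet rho (Order.succ s) ×ˢ (Set.univ : Set ℤ)) with hY
      have hcnt : ((X0 ∪ X) ∪ Y).Countable := by
        apply Set.Countable.union
        · exact (Set.countable_singleton _).union
            (Set.Countable.image Set.countable_univ _)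
        · apply Set.Countable.biUnion (countable_Iio hα)
          intro s hs
          exact Set.Countable.image (Set.Countable.prod
            (IH (Order.succ s) (hlim.succ_lt hs) ((hlim.succ_lt hs).trans hα))
            Set.countable_univ) _
      apply Set.Countable.mono _ hcnt
      rintro f ⟨β, hβ1, hβ2, rfl⟩
      rcases eq_or_lt_of_le hβ1 with heq | hβ1'
      · subst heq
        exact Or.inl (Or.inl rfl)
      obtain ⟨F, hFfin, hFlt, k, hk⟩ := hcoh α β hβ1' hβ2
      rcases F.eq_empty_or_nonempty with hF | hF
      · refine Or.inl (Or.inr ⟨k, Set.mem_univ _, ?_⟩)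
        funext ξ
        show (if ξ < α then G (rho ξ α) k else 0) = (if ξ < α then rho ξ β else 0)
        by_cases hξ : ξ < α
        · rw [if_pos hξ, if_pos hξ]
          exact (hk ξ hξ (by rw [hF]; simp)).symm
        · rw [if_neg hξ, if_neg hξ]
      · -- F nonempty: cut at s := sSup F
        have hsF : sSup F ∈ F := Set.Nonempty.csSup_mem hF hFfin
        have hsα : sSup F < α := hFlt _ hsF
        refine Or.inr (Set.mem_biUnion (Set.mem_Iio.mpr hsα)
          ⟨⟨fun ξ => if ξ < Order.succ (sSup F) then rho ξ β else 0, k⟩,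
           ⟨⟨β, le_trans (Order.succ_le_of_lt hsα) hβ1'.le, hβ2, rfl⟩,
            Set.mem_univ _⟩, ?_⟩)
        funext ξ
        show (if ξ < Order.succ (sSup F) then (if ξ < Order.succ (sSup F) then rho ξ β else 0)
            else if ξ < α then G (rho ξ α) k else 0) = (if ξ < α then rho ξ β else 0)
        by_cases h1 : ξ < Order.succ (sSup F)
        · rw [if_pos h1, if_pos h1, if_pos (h1.trans_le (Order.succ_le_of_lt hsα))]
        · rw [if_neg h1]
          by_cases h2 : ξ < α
          · rw [if_pos h2, if_pos h2]
            refine (hk ξ h2 ?_).symm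
            intro x hx
            have hxs : x ≤ sSup F := le_csSup hFfin.bddAbove hx
            have hsξ : Order.succ (sSup F) ≤ ξ := not_lt.mp h1
            exact lt_of_le_of_lt hxs (lt_of_lt_of_le (Order.lt_succ _) hsξ)
          · rw [if_neg h2, if_neg h2]

end Levels

lemma pick_above {F : Set Ordinal.{0}} {α : Ordinal} (hF : F.Finite)
    (hlt : ∀ x ∈ F, x < α) (hlim : Order.IsSuccLimit α) : ∃ ξ, ξ < α ∧ ∀ x ∈ F, x < ξ := by
  rcases F.eq_empty_or_nonempty with h | h
  · exact ⟨0, hlim.pos, by simp [h]⟩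
  · have hsF : sSup F ∈ F := Set.Nonempty.csSup_mem h hF
    refine ⟨Order.succ (sSup F), hlim.succ_lt (hlt _ hsF), ?_⟩
    intro x hx
    exact lt_of_le_of_lt (le_csSup hF.bddAbove hx) (Order.lt_succ _)

lemma limits_uncountable : ¬ {α : Ordinal.{0} | α < omega1 ∧ Order.IsSuccLimit α}.Countable := by
  intro h
  obtain ⟨γ, hγ, hbd⟩ := bounded_of_countable h (fun x hx => hx.1)
  have hlt : γ + Ordinal.omega0 < omega1 := by
    rw [show omega1 = (Cardinal.aleph 1).ord from rfl, Cardinal.lt_ord, Ordinal.card_add]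
    have h1 : γ.card ≤ Cardinal.aleph0 := by
      have := Cardinal.lt_ord.mp hγ
      rw [← Cardinal.succ_aleph0] at this
      exact Order.lt_succ_iff.mp this
    rw [Ordinal.card_omega0]
    calc γ.card + Cardinal.aleph0 ≤ Cardinal.aleph0 + Cardinal.aleph0 :=
          add_le_add h1 le_rfl
      _ = Cardinal.aleph0 := Cardinal.aleph0_add_aleph0
      _ < Cardinal.aleph 1 := Cardinal.aleph0_lt_aleph_one
  have hmem : γ + Ordinal.omega0 ∈ {α : Ordinal.{0} | α < omega1 ∧ Order.IsSuccLimit α} :=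
    ⟨hlt, Ordinal.isSuccLimit_add γ Ordinal.isSuccLimit_omega0⟩
  have hγlt : γ < γ + Ordinal.omega0 := by
    nth_rewrite 1 [← add_zero γ]
    exact (add_lt_add_iff_left γ).mpr Ordinal.omega0_pos
  exact absurd (hbd _ hmem) (not_le.mpr hγlt)

lemma exists_uncountable_fiber_int {S : Set Ordinal.{0}} (hS : ¬ S.Countable)
    (f : Ordinal → ℤ) : ∃ n : ℤ, ¬ {α | α ∈ S ∧ f α = n}.Countable := by
  by_contra h
  push_neg at h
  apply hS
  have : S ⊆ ⋃ n : ℤ, {α | α ∈ S ∧ f α = n} := fun α hα => Set.mem_iUnion.mpr ⟨f α, hα, rfl⟩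
  exact Set.Countable.mono this (Set.countable_iUnion h)

lemma Iio_omega1_uncountable : ¬ (Set.Iio omega1).Countable := by
  intro h
  obtain ⟨γ, hγ, hbd⟩ := bounded_of_countable h (fun x hx => hx)
  exact absurd (hbd (Order.succ γ) (omega1_isLimit.succ_lt hγ)) (not_le.mpr (Order.lt_succ γ))

section Chain

variable {rho : Ordinal.{0} → Ordinal.{0} → ℤ} {c : Set (Ordinal.{0} × (Ordinal.{0} → ℤ))}

lemma chain_setup (hsub : c ⊆ treeT rho)
    (hlin : ∀ p ∈ c, ∀ q ∈ c, treeLE p q ∨ treeLE q p) (hunc : ¬ c.Countable) :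
    ∃ b : Ordinal → ℤ, ∃ B : Ordinal → Ordinal,
      ∀ α, α < omega1 → α ≤ B α ∧ B α < omega1 ∧ ∀ ξ, ξ < α → b ξ = rho ξ (B α) := by
  classical
  have hlt1 : ∀ p ∈ c, p.1 < omega1 := by
    intro p hp
    obtain ⟨β, h1, h2, _⟩ := hsub hp
    exact lt_of_le_of_lt h1 h2
  have hinj : Set.InjOn Prod.fst c := by
    intro p hp q hq hpq
    obtain ⟨βp, hβp1, hβp2, hfp⟩ := hsub hp
    obtain ⟨βq, hβq1, hβq2, hfq⟩ := hsub hq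
    have h2 : p.2 = q.2 := by
      funext ξ
      by_cases hξ : ξ < p.1
      · rcases hlin p hp q hq with hle | hle
        · exact hle.2 ξ hξ
        · exact (hle.2 ξ (hpq ▸ hξ)).symm
      · rw [hfp, hfq]
        simp only
        rw [if_neg hξ, if_neg (hpq ▸ hξ)]
    exact Prod.ext hpq h2
  have himg : ¬ (Prod.fst '' c).Countable := by
    intro hcnt
    apply hunc
    have hsub2 : c ⊆ ⋃ a ∈ Prod.fst '' c, {p | p ∈ c ∧ p.1 = a} :=
      fun p hp => Set.mem_biUnion ⟨p, hp, rfl⟩ ⟨hp, rfl⟩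
    apply Set.Countable.mono hsub2
    apply Set.Countable.biUnion hcnt
    intro a _
    apply Set.Subsingleton.countable
    intro p hp q hq
    exact hinj hp.1 hq.1 (hp.2.trans hq.2.symm)
  have hub : ∀ γ, γ < omega1 → ∃ p ∈ c, γ < p.1 := by
    intro γ hγ
    obtain ⟨a, ⟨p, hp, rfl⟩, ha⟩ := unbounded_of_uncountable himg
      (by rintro x ⟨p, hp, rfl⟩; exact hlt1 p hp) γ hγ
    exact ⟨p, hp, ha⟩
  have hchoice : ∀ γ : Ordinal, ∃ p : Ordinal × (Ordinal → ℤ),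
      γ < omega1 → p ∈ c ∧ γ < p.1 := by
    intro γ
    by_cases hγ : γ < omega1
    · obtain ⟨p, hp, hlt⟩ := hub γ hγ
      exact ⟨p, fun _ => ⟨hp, hlt⟩⟩
    · exact ⟨(0, fun _ => 0), fun h => absurd h hγ⟩
  choose P hP using hchoice
  set b : Ordinal → ℤ := fun ξ => (P ξ).2 ξ with hb
  have hcohb : ∀ p ∈ c, ∀ ξ, ξ < omega1 → ξ < p.1 → b ξ = p.2 ξ := by
    intro p hp ξ hξω hξp
    have hPξ := hP ξ hξω
    rcases hlin _ hPξ.1 p hp with hle | hle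
    · exact hle.2 ξ hPξ.2
    · exact (hle.2 ξ hξp).symm
  have hBex : ∀ α : Ordinal, ∃ β : Ordinal, α < omega1 →
      α ≤ β ∧ β < omega1 ∧ ∀ ξ, ξ < α → b ξ = rho ξ β := by
    intro α
    by_cases hα : α < omega1
    · have hPα := hP α hα
      obtain ⟨β, hβ1, hβ2, hform⟩ := hsub hPα.1
      refine ⟨β, fun _ => ⟨le_trans hPα.2.le hβ1, hβ2, ?_⟩⟩
      intro ξ hξα
      rw [hcohb _ hPα.1 ξ (hξα.trans hα) (hξα.trans hPα.2), hform]
      simp only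
      rw [if_pos (hξα.trans hPα.2)]
    · exact ⟨0, fun h => absurd h hα⟩
  choose B hB using hBex
  exact ⟨b, B, fun α hα => hB α hα⟩

end Chain

lemma seq_construction {S : Set Ordinal.{0}} (hS : ¬ S.Countable)
    (hS1 : ∀ x ∈ S, x < omega1) (γ : Ordinal) (hγ : γ < omega1) :
    ∃ α' : Ordinal, ∃ seq : ℕ → Ordinal, α' < omega1 ∧ γ < α' ∧ Order.IsSuccLimit α' ∧
      StrictMono seq ∧ (∀ n, seq n ∈ S ∧ seq n < α') ∧ (∀ x, x < α' → ∃ n, x < seq n) := by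
  have hub := unbounded_of_uncountable hS hS1
  have hch : ∀ x : Ordinal, ∃ y : Ordinal, x < omega1 → y ∈ S ∧ x < y := by
    intro x
    by_cases hx : x < omega1
    · obtain ⟨y, h1, h2⟩ := hub x hx
      exact ⟨y, fun _ => ⟨h1, h2⟩⟩
    · exact ⟨0, fun h => absurd h hx⟩
  choose g hg using hch
  set seq : ℕ → Ordinal := fun n => Nat.rec (g γ) (fun _ p => g p) n with hseq
  have hgood : ∀ n, seq n ∈ S ∧ seq n < omega1 := by
    intro n
    induction n with
    | zero =>
      have := hg γ hγ
      exact ⟨this.1, hS1 _ this.1⟩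
    | succ k IH =>
      have := hg (seq k) IH.2
      exact ⟨this.1, hS1 _ this.1⟩
  have hmono' : ∀ n, seq n < seq (n+1) := fun n => (hg (seq n) (hgood n).2).2
  have hmono : StrictMono seq := strictMono_nat_of_lt_succ hmono'
  have hbdd : BddAbove (Set.range seq) := Ordinal.bddAbove_range seq
  have hle : ∀ n, seq n ≤ ⨆ k, seq k := fun n => le_ciSup hbdd n
  have hltsup : ∀ n, seq n < ⨆ k, seq k :=
    fun n => lt_of_lt_of_le (hmono' n) (hle (n+1))
  have hcof : ∀ x, x < ⨆ k, seq k → ∃ n, x < seq n :=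
    fun x hx => (lt_ciSup_iff hbdd).mp hx
  refine ⟨⨆ k, seq k, seq, sup_lt_omega1 (fun n => (hgood n).2),
    lt_of_lt_of_le (hg γ hγ).2 (hle 0), Ordinal.isSuccLimit_iff.mpr ⟨?_, Order.isSuccPrelimit_iff_succ_lt.mpr ?_⟩, hmono,
    fun n => ⟨(hgood n).1, hltsup n⟩, hcof⟩
  · intro h0
    exact absurd (h0 ▸ hltsup 0) (fun h => not_lt_zero h)
  · intro a ha
    obtain ⟨n, hn⟩ := hcof a ha
    exact lt_of_le_of_lt (Order.succ_le_of_lt hn) (hltsup n)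

end Stmt7Aux

open Stmt7Aux in
/-- Corollary: for a C-sequence on ω₁ satisfying (⋆) and `ρ` either of the characteristics
`ρ₁`, `ρ₂`, the tree `T(ρ)`, ordered by extension, is an Aronszajn tree: it has elements
with domain `α` for every `α < ω₁`, all its levels are countable, and it has no
uncountable chain. -/
theorem statement7 (C : Ordinal → Set Ordinal) (hC : IsCSequence C) (hstar : StarProperty C)
    (Tr : Ordinal → Ordinal → Finset Ordinal) (hTr : IsUpperTrace C Tr)
    (rho : Ordinal → Ordinal → ℤ)
    (hrho : (∃ rho1 : Ordinal → Ordinal → ℕ, IsRho1 C Tr rho1 ∧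
              ∀ α β, α < β → β < omega1 → rho α β = rho1 α β) ∨
            (∀ α β, rho α β = rho2 Tr α β)) :
    (∀ α, α < omega1 → ∃ p ∈ treeT rho, p.1 = α) ∧
    (∀ α, α < omega1 → {p ∈ treeT rho | p.1 = α}.Countable) ∧
    ¬∃ c : Set (Ordinal × (Ordinal → ℤ)), c ⊆ treeT rho ∧
      (∀ p ∈ c, ∀ q ∈ c, treeLE p q ∨ treeLE q p) ∧ ¬c.Countable := by
  classical
  refine ⟨?_, ?_, ?_⟩
  · -- (1) elements at every level
    intro α hα
    exact ⟨(α, fun ξ => if ξ < α then rho ξ α else 0), ⟨α, le_refl α, hα, rfl⟩, rfl⟩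
  · -- (2) countable levels
    intro α hα
    have hlev : (LevelSet rho α).Countable := by
      rcases hrho with ⟨rho1, hrho1, hlink⟩ | hrho2
      · apply levels_countable rho (fun a k => max a k) ?_ α hα
        intro α' β' hab hb
        obtain ⟨F, h1, h2, h3⟩ := rho1_tail hC hstar hTr hrho1 hab hb
        refine ⟨F, h1, h2, ((rho1 α' β' : ℕ) : ℤ), ?_⟩
        intro ξ hξ hdom
        rw [hlink ξ β' (hξ.trans hab) hb, hlink ξ α' hξ (hab.trans hb), h3 ξ hξ hdom]
        push_cast
        rw [max_comm]
      · apply levels_countable rho (fun a k => a + k) ?_ α hα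
        intro α' β' hab hb
        obtain ⟨F, h1, h2, h3⟩ := rho2_tail hC hstar hTr hab hb
        refine ⟨F, h1, h2, rho2 Tr α' β' - 1, ?_⟩
        intro ξ hξ hdom
        rw [hrho2 ξ β', hrho2 ξ α', h3 ξ hξ hdom]
    apply Set.Countable.mono ?_ (hlev.image (fun f => (α, f)))
    rintro p ⟨⟨β, h1, h2, h3⟩, h4⟩
    refine ⟨p.2, ⟨β, ?_, h2, ?_⟩, ?_⟩
    · rw [← h4]; exact h1
    · rw [← h4]; exact h3
    · exact Prod.ext h4.symm rfl
  · -- (3) no uncountable chain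
    rintro ⟨c, hsub, hlin, hunc⟩
    obtain ⟨b, B, hB⟩ := chain_setup hsub hlin hunc
    rcases hrho with ⟨rho1, hrho1, hlink⟩ | hrho2
    · -- ρ₁ case : b is finite-to-one on a tail, contradiction
      obtain ⟨n, hSunc⟩ := exists_uncountable_fiber_int Iio_omega1_uncountable b
      set S := {α | α ∈ Set.Iio omega1 ∧ b α = n} with hS
      have hSne : S.Nonempty := by
        rcases S.eq_empty_or_nonempty with h | h
        · exact absurd (h ▸ Set.countable_empty) hSunc
        · exact h
      obtain ⟨α₀, hα₀⟩ := hSne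
      -- the common value is a natural number
      have hnn : ∀ α, α < omega1 → ∃ m : ℕ, b α = (m : ℤ) := by
        intro α hα
        have hsα : Order.succ α < omega1 := omega1_isLimit.succ_lt hα
        obtain ⟨h1, h2, h3⟩ := hB _ hsα
        have hbv := h3 α (Order.lt_succ α)
        have hαB : α < B (Order.succ α) := lt_of_lt_of_le (Order.lt_succ α) h1
        rw [hlink α _ hαB h2] at hbv
        exact ⟨rho1 α (B (Order.succ α)), hbv⟩
      obtain ⟨m, hm⟩ := hnn α₀ hα₀.1
      have hn : n = (m : ℤ) := hα₀.2 ▸ hm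
      obtain ⟨α', seq, hα'ω, _, _, hseqmono, hseqmem, _⟩ :=
        seq_construction hSunc (fun x hx => hx.1) 0 omega1_isLimit.pos
      obtain ⟨hB1, hB2, hB3⟩ := hB α' hα'ω
      have hfin := rho1_fto hC hstar hTr hrho1 (B α') hB2 m
      apply hfin.not_infinite
      apply Set.infinite_of_injective_forall_mem hseqmono.injective
      intro k
      have hkS : seq k ∈ S := (hseqmem k).1
      have hkα' : seq k < α' := (hseqmem k).2
      have hkB : seq k < B α' := lt_of_lt_of_le hkα' hB1
      have hval : b (seq k) = rho (seq k) (B α') := hB3 _ hkα'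
      rw [hlink _ _ hkB hB2] at hval
      have hveq : ((rho1 (seq k) (B α') : ℕ) : ℤ) = (m : ℤ) := by
        rw [← hval, hkS.2, hn]
      exact ⟨hkB, le_of_eq (by exact_mod_cast hveq)⟩
    · -- ρ₂ case
      have hone : ∀ α, rho α α = 1 := by
        intro α
        rw [hrho2, rho2, hTr.1]
        simp
      have hge2 : ∀ α β, α < β → β < omega1 → (2 : ℤ) ≤ rho α β := by
        intro α β hαβ hβ
        rw [hrho2, rho2]
        have htm := trace_mem hC hTr β hβ α hαβ.le
        have h1 : 1 < (Tr α β).card :=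
          Finset.one_lt_card.mpr ⟨α, htm.1, β, htm.2.1, hαβ.ne⟩
        exact_mod_cast h1
      -- unified tail formula along the branch
      have key : ∀ α β, α ≤ β → β < omega1 → (∀ ξ, ξ < α → b ξ = rho ξ β) →
          ∃ F : Set Ordinal, F.Finite ∧ (∀ x ∈ F, x < α) ∧
            ∀ ξ, ξ < α → (∀ x ∈ F, x < ξ) → b ξ = rho ξ α + (rho α β - 1) := by
        intro α β hle hβ hag
        rcases eq_or_lt_of_le hle with heq | hlt
        · subst heq
          refine ⟨∅, Set.finite_empty, by simp, ?_⟩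
          intro ξ hξ _
          rw [hag ξ hξ, hone α]
          ring
        · obtain ⟨F, h1, h2, h3⟩ := rho2_tail hC hstar hTr hlt hβ
          refine ⟨F, h1, h2, ?_⟩
          intro ξ hξ hdom
          rw [hag ξ hξ, hrho2 ξ β, hrho2 ξ α, hrho2 α β]
          exact h3 ξ hξ hdom
      set cfun : Ordinal → ℤ := fun α => rho α (B α) - 1 with hcfun
      have hc_spec : ∀ α, α < omega1 → Order.IsSuccLimit α → ∀ β, α ≤ β → β < omega1 →
          (∀ ξ, ξ < α → b ξ = rho ξ β) → rho α β - 1 = cfun α := by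
        intro α hα hlim β hβle hβω hag
        obtain ⟨hB1, hB2, hB3⟩ := hB α hα
        obtain ⟨F1, h11, h12, h13⟩ := key α β hβle hβω hag
        obtain ⟨F2, h21, h22, h23⟩ := key α (B α) hB1 hB2 hB3
        obtain ⟨ξ, hξα, hdom⟩ := pick_above (h11.union h21)
          (fun x hx => hx.elim (h12 x) (h22 x)) hlim
        have e1 := h13 ξ hξα (fun x hx => hdom x (Set.mem_union_left _ hx))
        have e2 := h23 ξ hξα (fun x hx => hdom x (Set.mem_union_right _ hx))
        have e := e1.symm.trans e2
        show rho α β - 1 = rho α (B α) - 1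
        linarith
      have hcnonneg : ∀ α, α < omega1 → 0 ≤ cfun α := by
        intro α hα
        obtain ⟨hB1, hB2, _⟩ := hB α hα
        have htm := trace_mem hC hTr (B α) hB2 α hB1
        have hpos : 0 < (Tr α (B α)).card := Finset.card_pos.mpr ⟨α, htm.1⟩
        have h1 : (1 : ℤ) ≤ ((Tr α (B α)).card : ℤ) := by exact_mod_cast hpos
        show 0 ≤ rho α (B α) - 1
        rw [hrho2, rho2]
        linarith
      set fib : ℕ → Set Ordinal := fun k =>
        {α | (α < omega1 ∧ Order.IsSuccLimit α) ∧ (cfun α).toNat = k} with hfib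
      have hVne : {k : ℕ | ¬ (fib k).Countable}.Nonempty := by
        by_contra hy
        have hall : ∀ k, (fib k).Countable := by
          intro k
          by_contra hk
          exact hy ⟨k, hk⟩
        apply limits_uncountable
        have hsub3 : {α : Ordinal | α < omega1 ∧ Order.IsSuccLimit α} ⊆ ⋃ k : ℕ, fib k := by
          intro α hα
          exact Set.mem_iUnion.mpr ⟨(cfun α).toNat, hα, rfl⟩
        exact Set.Countable.mono hsub3 (Set.countable_iUnion hall)
      set n₀ := sInf {k : ℕ | ¬ (fib k).Countable} with hn₀
      have hSunc : ¬ (fib n₀).Countable := Nat.sInf_mem hVne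
      have hWc : {α | (α < omega1 ∧ Order.IsSuccLimit α) ∧ (cfun α).toNat < n₀}.Countable := by
        have hsub2 : {α | (α < omega1 ∧ Order.IsSuccLimit α) ∧ (cfun α).toNat < n₀} ⊆
            ⋃ m ∈ Set.Iio n₀, fib m :=
          fun α hα => Set.mem_biUnion (Set.mem_Iio.mpr hα.2) ⟨hα.1, rfl⟩
        apply Set.Countable.mono hsub2
        apply Set.Countable.biUnion (Set.to_countable _)
        intro m hm
        by_contra hmc
        exact absurd (Nat.sInf_le hmc) (not_le.mpr (Set.mem_Iio.mp hm))
      obtain ⟨γst, hγst, hbd⟩ := bounded_of_countable hWc (fun x hx => hx.1.1)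
      obtain ⟨α', seq, hα'ω, hγα', hα'lim, hseqmono, hseqmem, hseqcof⟩ :=
        seq_construction hSunc (fun x hx => hx.1.1) γst hγst
      obtain ⟨hB1', hB2', hB3'⟩ := hB α' hα'ω
      obtain ⟨F', hF'fin, hF'lt, hF'⟩ := key α' (B α') hB1' hB2' hB3'
      obtain ⟨x₀, hx₀α', hx₀dom⟩ := pick_above hF'fin hF'lt hα'lim
      obtain ⟨j, hj⟩ := hseqcof x₀ hx₀α'
      have hαS : seq j ∈ fib n₀ := (hseqmem j).1
      have hαα' : seq j < α' := (hseqmem j).2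
      have hαω : seq j < omega1 := hαα'.trans hα'ω
      have hαlim : Order.IsSuccLimit (seq j) := hαS.1.2
      have hcα : cfun (seq j) = (n₀ : ℤ) := by
        have h0 := hcnonneg (seq j) hαω
        have h1 := hαS.2
        omega
      obtain ⟨F1, h11, h12, h13⟩ := key (seq j) (B α') (hαα'.le.trans hB1') hB2'
        (fun ξ hξ => hB3' ξ (hξ.trans hαα'))
      obtain ⟨F2, h21, h22, h23⟩ := rho2_tail hC hstar hTr hαα' hα'ω
      have hF'α : ∀ x ∈ F', x < seq j := fun x hx => lt_trans (hx₀dom x hx) hj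
      obtain ⟨ξ, hξα, hdom⟩ := pick_above ((h11.union h21).union hF'fin)
        (fun x hx => hx.elim (fun h => h.elim (h12 x) (h22 x)) (hF'α x)) hαlim
      have e1 := h13 ξ hξα
        (fun x hx => hdom x (Set.mem_union_left _ (Set.mem_union_left _ hx)))
      have e2 := hF' ξ (hξα.trans hαα')
        (fun x hx => hdom x (Set.mem_union_right _ hx))
      have e3 := h23 ξ hξα
        (fun x hx => hdom x (Set.mem_union_left _ (Set.mem_union_right _ hx)))
      have e3' : rho ξ α' = rho ξ (seq j) + (rho (seq j) α' - 1) := by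
        rw [hrho2 ξ α', hrho2 ξ (seq j), hrho2 (seq j) α']
        exact e3
      have hcval1 : rho (seq j) (B α') - 1 = cfun (seq j) :=
        hc_spec (seq j) hαω hαlim (B α') (hαα'.le.trans hB1') hB2'
          (fun ξ' hξ' => hB3' ξ' (hξ'.trans hαα'))
      have hcval2 : rho α' (B α') - 1 = cfun α' :=
        hc_spec α' hα'ω hα'lim (B α') hB1' hB2' hB3'
      have hrel : cfun (seq j) = cfun α' + (rho (seq j) α' - 1) := by
        have e := e1.symm.trans e2
        rw [e3'] at e
        linarith
      have hcα'lt : cfun α' < (n₀ : ℤ) := by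
        have h2 := hge2 (seq j) α' hαα' hα'ω
        rw [hcα] at hrel
        linarith
      have hα'W : α' ∈ {α | (α < omega1 ∧ Order.IsSuccLimit α) ∧ (cfun α).toNat < n₀} := by
        refine ⟨⟨hα'ω, hα'lim⟩, ?_⟩
        have h0 := hcnonneg α' hα'ω
        omega
      exact absurd (hbd α' hα'W) (not_le.mpr hγα')
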